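/- (Lemma 3 of the paper.) Suppose every loss is quadratic: φ_i(x) = (1/(2γ))(x − y_i)² for given y_i ∈ ℝ. Let p ∈ ℝⁿ be a probability vector with p_i > 0 for every i ∈ I = {i : κ_i ≠ 0}, and for each i let Δ_i ∈ ℝ maximize Δ ↦ −φ_i*(−(α_i + Δ)) − (A_iᵀw)·Δ − (v_i/(2λn))·Δ². Then for EVERY θ ∈ [0, ∞) (no upper restriction by min_{i∈I} p_i): ∑_{i=1}^n p_i·(D(α + Δ_i e_i) − D(α)) − θ·(P(w) − D(α)) ≥ −(θ/(2λn²))·∑_{i ∈ I} ( θ(v_i + nλγ)/p_i − nλγ )·κ_i². -/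

import Mathlib

open scoped BigOperators InnerProductSpace

set_option maxHeartbeats 1600000 in
/-- Lemma 3 of the paper: Suppose every loss is quadratic:
`φᵢ(x) = (1/(2γ))(x − yᵢ)²`. Let `p` be a probability vector with `pᵢ > 0` for every
`i ∈ I = {i : κᵢ ≠ 0}`, and let `Δᵢ` maximize
`Δ ↦ −φᵢ*(−(αᵢ+Δ)) − (Aᵢᵀw)Δ − (vᵢ/(2λn))Δ²`. Then for EVERY `θ ∈ [0,∞)` (no upper
restriction by `min_{i∈I} pᵢ`):
`∑ᵢ pᵢ(D(α+Δᵢeᵢ) − D(α)) − θ(P(w) − D(α)) ≥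
 −(θ/(2λn²))·∑_{i∈I} (θ(vᵢ+nλγ)/pᵢ − nλγ)κᵢ²`. -/
theorem stmt17 (n d : ℕ) (hn : 1 ≤ n) (hd : 1 ≤ d)
    (A : Fin n → EuclideanSpace ℝ (Fin d))
    (v : Fin n → ℝ) (hv : ∀ i, v i = ‖A i‖ ^ 2)
    (lam gam : ℝ) (hlam : 0 < lam) (hgam : 0 < gam)
    (g : EuclideanSpace ℝ (Fin d) → ℝ)
    (hg : ∀ w₁ w₂ : EuclideanSpace ℝ (Fin d), ∀ a : ℝ, 0 ≤ a → a ≤ 1 →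
      g (a • w₁ + (1 - a) • w₂) ≤ a * g w₁ + (1 - a) * g w₂ - a * (1 - a) / 2 * ‖w₁ - w₂‖ ^ 2)
    (y : Fin n → ℝ)
    (φ φ' : Fin n → ℝ → ℝ)
    (hφ : ∀ i x, φ i x = 1 / (2 * gam) * (x - y i) ^ 2)
    (hφdiff : ∀ i x, HasDerivAt (φ i) (φ' i x) x)
    (φs : Fin n → ℝ → ℝ)
    (hφs : ∀ i u, IsLUB (Set.range fun x : ℝ => x * u - φ i x) (φs i u))
    (gs : EuclideanSpace ℝ (Fin d) → ℝ)
    (hgs : ∀ z, IsLUB (Set.range fun s : EuclideanSpace ℝ (Fin d) => ⟪s, z⟫_ℝ - g s) (gs z))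
    (gs' : EuclideanSpace ℝ (Fin d) → EuclideanSpace ℝ (Fin d))
    (hgs' : ∀ z, HasGradientAt gs (gs' z) z)
    (hgs'lip : LipschitzWith 1 gs')
    (P : EuclideanSpace ℝ (Fin d) → ℝ)
    (hP : ∀ u, P u = (1 / (n : ℝ)) * ∑ i, φ i ⟪A i, u⟫_ℝ + lam * g u)
    (D : (Fin n → ℝ) → ℝ)
    (hD : ∀ β : Fin n → ℝ,
      D β = -lam * gs ((1 / (lam * n)) • (∑ i, β i • A i)) - (1 / (n : ℝ)) * ∑ i, φs i (-β i))
    (α : Fin n → ℝ)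
    (abar : EuclideanSpace ℝ (Fin d))
    (habar : abar = (1 / (lam * n)) • (∑ i, α i • A i))
    (w : EuclideanSpace ℝ (Fin d)) (hw : w = gs' abar)
    (hattain : g w + gs abar = ⟪w, abar⟫_ℝ)
    (κ : Fin n → ℝ) (hκ : ∀ i, κ i = α i + φ' i ⟪A i, w⟫_ℝ)
    (Δ : Fin n → ℝ)
    (hΔ : ∀ i, ∀ Δ' : ℝ,
      -φs i (-(α i + Δ')) - ⟪A i, w⟫_ℝ * Δ' - v i / (2 * lam * n) * Δ' ^ 2 ≤
      -φs i (-(α i + Δ i)) - ⟪A i, w⟫_ℝ * (Δ i) - v i / (2 * lam * n) * (Δ i) ^ 2)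
    (p : Fin n → ℝ) (hp0 : ∀ i, 0 ≤ p i) (hp1 : ∑ i, p i = 1)
    (hcoh : ∀ i, κ i ≠ 0 → 0 < p i)
    (θ : ℝ) (hθ0 : 0 ≤ θ) :
    ∑ i, p i * (D (Function.update α i (α i + Δ i)) - D α) - θ * (P w - D α) ≥
      -(θ / (2 * lam * (n : ℝ) ^ 2)) *
        ∑ i ∈ Finset.univ.filter (fun i => κ i ≠ 0),
          (θ * (v i + n * lam * gam) / p i - n * lam * gam) * κ i ^ 2 := by
  have hn' : (0:ℝ) < (n:ℝ) := by exact_mod_cast Nat.lt_of_lt_of_le Nat.zero_lt_one hn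
  have hγ : gam ≠ 0 := ne_of_gt hgam
  have hlne : lam ≠ 0 := ne_of_gt hlam
  have hnne : (n:ℝ) ≠ 0 := ne_of_gt hn'
  -- closed form of the conjugate of the quadratic loss
  have hφsf : ∀ i u, φs i u = y i * u + gam * u ^ 2 / 2 := by
    intro i u
    have hG : IsGreatest (Set.range fun x : ℝ => x * u - φ i x) (y i * u + gam * u ^ 2 / 2) := by
      constructor
      · exact ⟨y i + gam * u, by simp only [hφ]; field_simp; ring⟩
      · rintro z ⟨x, rfl⟩
        simp only [hφ]
        have key : x * u - 1 / (2 * gam) * (x - y i) ^ 2 =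
            y i * u + gam * u ^ 2 / 2 - 1 / (2 * gam) * (x - y i - gam * u) ^ 2 := by
          field_simp; ring
        have h2 : 0 ≤ 1 / (2 * gam) * (x - y i - gam * u) ^ 2 := by positivity
        linarith
    exact (hφs i u).unique hG.isLUB
  -- derivative of the quadratic loss
  have hφ'f : ∀ i x, φ' i x = (x - y i) / gam := by
    intro i x
    have h1 : HasDerivAt (fun x : ℝ => 1 / (2 * gam) * (x - y i) ^ 2) ((x - y i) / gam) x := by
      have := (((hasDerivAt_id x).sub_const (y i)).pow 2).const_mul (1 / (2 * gam))
      refine this.congr_deriv ?_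
      simp only [id]
      field_simp
      ring
    have h2 : HasDerivAt (φ i) ((x - y i) / gam) x := by
      have heq : φ i = fun x : ℝ => 1 / (2 * gam) * (x - y i) ^ 2 := funext (hφ i)
      rw [heq]; exact h1
    exact (hφdiff i x).unique h2
  have hκf : ∀ i, κ i = α i + (⟪A i, w⟫_ℝ - y i) / gam := fun i => by
    rw [hκ, hφ'f]
  -- strong-convexity consequence for the conjugate
  have haux3 : ∀ s : EuclideanSpace ℝ (Fin d),
      ⟪s, abar⟫_ℝ - g s ≤ gs abar - ‖s - w‖ ^ 2 / 2 := by
    intro s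
    have step : ∀ a : ℝ, 0 < a → a ≤ 1 →
        ⟪s, abar⟫_ℝ - g s + (1 - a) / 2 * ‖s - w‖ ^ 2 ≤ gs abar := by
      intro a ha0 ha1
      have key := hg s w a (le_of_lt ha0) ha1
      have mem : ⟪a • s + (1 - a) • w, abar⟫_ℝ - g (a • s + (1 - a) • w) ≤ gs abar :=
        (hgs abar).1 ⟨a • s + (1 - a) • w, rfl⟩
      have hinner : ⟪a • s + (1 - a) • w, abar⟫_ℝ = a * ⟪s, abar⟫_ℝ + (1 - a) * ⟪w, abar⟫_ℝ := by
        rw [inner_add_left, real_inner_smul_left, real_inner_smul_left]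
      rw [hinner] at mem
      have goal' : a * (⟪s, abar⟫_ℝ - g s + (1 - a) / 2 * ‖s - w‖ ^ 2) ≤ a * gs abar := by
        nlinarith [key, mem, hattain]
      exact le_of_mul_le_mul_left goal' ha0
    by_contra hcon
    push_neg at hcon
    set X := ⟪s, abar⟫_ℝ - g s + ‖s - w‖ ^ 2 / 2 - gs abar with hX
    have hXpos : 0 < X := by simp only [hX]; linarith
    have hN : 0 ≤ ‖s - w‖ ^ 2 / 2 := by positivity
    set a := min 1 (X / (‖s - w‖ ^ 2 / 2 + 1)) with ha
    have hden : 0 < ‖s - w‖ ^ 2 / 2 + 1 := by linarith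
    have ha0 : 0 < a := lt_min one_pos (div_pos hXpos hden)
    have ha1 : a ≤ 1 := min_le_left _ _
    have hst := step a ha0 ha1
    have h2 : X ≤ a * (‖s - w‖ ^ 2 / 2) := by simp only [hX]; nlinarith [hst]
    have h3 : a * (‖s - w‖ ^ 2 / 2) ≤ (X / (‖s - w‖ ^ 2 / 2 + 1)) * (‖s - w‖ ^ 2 / 2) :=
      mul_le_mul_of_nonneg_right (min_le_right _ _) hN
    have h4 : (X / (‖s - w‖ ^ 2 / 2 + 1)) * (‖s - w‖ ^ 2 / 2) < X := by
      rw [div_mul_eq_mul_div, div_lt_iff₀ hden]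
      nlinarith
    linarith
  -- smoothness upper bound on gs
  have haux4 : ∀ u : EuclideanSpace ℝ (Fin d),
      gs (abar + u) ≤ gs abar + ⟪w, u⟫_ℝ + ‖u‖ ^ 2 / 2 := by
    intro u
    refine (hgs (abar + u)).2 ?_
    rintro z ⟨s, rfl⟩
    simp only
    have h1 : ⟪s, abar + u⟫_ℝ = ⟪s, abar⟫_ℝ + ⟪s, u⟫_ℝ := inner_add_right _ _ _
    have h2 := haux3 s
    have h3 : ⟪s, u⟫_ℝ = ⟪w, u⟫_ℝ + ⟪s - w, u⟫_ℝ := by rw [inner_sub_left]; ring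
    have h4 : ⟪s - w, u⟫_ℝ ≤ ‖s - w‖ * ‖u‖ := real_inner_le_norm _ _
    nlinarith [sq_nonneg (‖s - w‖ - ‖u‖)]
  -- duality gap identity
  have hgap : P w - D α = gam / (2 * n) * ∑ i, κ i ^ 2 := by
    have hwabar : ⟪w, abar⟫_ℝ = (1 / (lam * n)) * ∑ i, α i * ⟪A i, w⟫_ℝ := by
      rw [habar, real_inner_smul_right, inner_sum]
      congr 1
      refine Finset.sum_congr rfl fun i _ => ?_
      rw [real_inner_smul_right, real_inner_comm]
    have key : P w - D α
        = (1 / (n : ℝ)) * ∑ i, (φ i ⟪A i, w⟫_ℝ + φs i (-α i) + α i * ⟪A i, w⟫_ℝ) := by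
      rw [hP, hD α, ← habar]
      have hg2 : lam * g w + lam * gs abar = (1 / (n : ℝ)) * ∑ i, α i * ⟪A i, w⟫_ℝ := by
        rw [← mul_add, hattain, hwabar]
        field_simp
      have expand : ∑ i, (φ i ⟪A i, w⟫_ℝ + φs i (-α i) + α i * ⟪A i, w⟫_ℝ)
          = (∑ i, φ i ⟪A i, w⟫_ℝ) + (∑ i, φs i (-α i)) + ∑ i, α i * ⟪A i, w⟫_ℝ := by
        rw [Finset.sum_add_distrib, Finset.sum_add_distrib]
      rw [expand]
      linear_combination hg2
    rw [key, Finset.mul_sum, Finset.mul_sum]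
    refine Finset.sum_congr rfl fun i _ => ?_
    rw [hφ, hφsf, hκf]
    field_simp
    ring
  -- per-coordinate dual improvement bound
  have haux6 : ∀ i, ∀ s : ℝ,
      1 / (n : ℝ) * (κ i ^ 2 * (gam * s - s ^ 2 * (v i + lam * n * gam) / (2 * lam * n)))
        ≤ D (Function.update α i (α i + Δ i)) - D α := by
    intro i s
    set c := α i + Δ i with hc
    have hupd : (fun j => (Function.update α i c) j • A j)
        = Function.update (fun j => α j • A j) i (c • A i) := by
      funext j
      by_cases h : j = i
      · subst h; simp
      · simp [Function.update_of_ne h]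
    have hsum : ∑ j, (Function.update α i c) j • A j
        = (∑ j, α j • A j) + Δ i • A i := by
      rw [hupd, Finset.sum_update_of_mem (Finset.mem_univ i)]
      rw [Finset.sum_eq_sum_sdiff_singleton_add (Finset.mem_univ i) (fun j => α j • A j)]
      have : c • A i = α i • A i + Δ i • A i := by rw [hc, add_smul]
      rw [this]; abel
    have hpoint : (1 / (lam * (n:ℝ))) • (∑ j, (Function.update α i c) j • A j)
        = abar + (Δ i / (lam * n)) • A i := by
      rw [hsum, smul_add, ← habar, smul_smul]
      congr 2
      field_simp
    have hφsum : ∑ j, φs j (-(Function.update α i c) j)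
        = (∑ j, φs j (-α j)) - φs i (-α i) + φs i (-c) := by
      have h2 : (fun j => φs j (-(Function.update α i c) j))
          = Function.update (fun j => φs j (-α j)) i (φs i (-c)) := by
        funext j
        by_cases h : j = i
        · subst h; simp
        · simp [Function.update_of_ne h]
      rw [h2, Finset.sum_update_of_mem (Finset.mem_univ i)]
      rw [Finset.sum_eq_sum_sdiff_singleton_add (Finset.mem_univ i) (fun j => φs j (-α j))]
      ring
    set u : EuclideanSpace ℝ (Fin d) := (Δ i / (lam * n)) • A i with hu
    have hinner : ⟪w, u⟫_ℝ = (Δ i / (lam * n)) * ⟪A i, w⟫_ℝ := by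
      rw [hu, real_inner_smul_right, real_inner_comm]
    have hnorm : ‖u‖ ^ 2 = (Δ i / (lam * n)) ^ 2 * v i := by
      rw [hu, norm_smul, mul_pow, hv, Real.norm_eq_abs, sq_abs]
    have hbound : 1 / (n:ℝ) * ((-φs i (-(α i + Δ i)) - ⟪A i, w⟫_ℝ * (Δ i)
          - v i / (2 * lam * n) * (Δ i) ^ 2) + φs i (-α i))
        ≤ D (Function.update α i c) - D α := by
      rw [hD, hD, hpoint, hφsum, ← hc, ← habar]
      have h4 := haux4 u
      rw [hinner, hnorm] at h4
      have hvnn : 0 ≤ v i := by rw [hv]; positivity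
      have expand : (-lam * gs (abar + u)
            - 1 / (n:ℝ) * ((∑ j, φs j (-α j)) - φs i (-α i) + φs i (-c)))
          - (-lam * gs abar - 1 / (n:ℝ) * ∑ j, φs j (-α j))
          = -lam * (gs (abar + u) - gs abar) - 1 / (n:ℝ) * (φs i (-c) - φs i (-α i)) := by
        ring
      rw [expand]
      have h5 : -lam * (gs (abar + u) - gs abar)
          ≥ -lam * ((Δ i / (lam * n)) * ⟪A i, w⟫_ℝ + (Δ i / (lam * n)) ^ 2 * v i / 2) := by
        have h6 : gs (abar + u) - gs abar
            ≤ (Δ i / (lam * n)) * ⟪A i, w⟫_ℝ + (Δ i / (lam * n)) ^ 2 * v i / 2 := by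
          linarith
        nlinarith [h6, hlam.le]
      have heq : -lam * ((Δ i / (lam * n)) * ⟪A i, w⟫_ℝ + (Δ i / (lam * n)) ^ 2 * v i / 2)
          - 1 / (n:ℝ) * (φs i (-c) - φs i (-α i))
          = 1 / (n:ℝ) * ((-φs i (-(α i + Δ i)) - ⟪A i, w⟫_ℝ * (Δ i)
              - v i / (2 * lam * n) * (Δ i) ^ 2) + φs i (-α i)) := by
        rw [hc]
        field_simp
        ring
      linarith
    have htrial := hΔ i (-(s * κ i))
    have halg : -φs i (-(α i + -(s * κ i))) - ⟪A i, w⟫_ℝ * (-(s * κ i))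
        - v i / (2 * lam * n) * (-(s * κ i)) ^ 2 + φs i (-α i)
        = κ i ^ 2 * (gam * s - s ^ 2 * (v i + lam * n * gam) / (2 * lam * n)) := by
      set X := ⟪A i, w⟫_ℝ with hX
      have h := hκf i
      rw [← hX] at h
      have hx : X = y i + gam * (κ i - α i) := by
        rw [h]; field_simp; ring
      rw [hφsf, hφsf, hx]
      field_simp
      ring
    have hmono : 1 / (n:ℝ) * (κ i ^ 2 * (gam * s - s ^ 2 * (v i + lam * n * gam) / (2 * lam * n)))
        ≤ 1 / (n:ℝ) * ((-φs i (-(α i + Δ i)) - ⟪A i, w⟫_ℝ * (Δ i)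
            - v i / (2 * lam * n) * (Δ i) ^ 2) + φs i (-α i)) := by
      rw [← halg]
      have h1n : 0 < 1 / (n:ℝ) := by positivity
      apply mul_le_mul_of_nonneg_left _ h1n.le
      linarith [htrial]
    exact le_trans hmono hbound
  -- assembly
  set I := Finset.univ.filter (fun i => κ i ≠ 0) with hI
  set sf : Fin n → ℝ := fun i => if κ i = 0 then 0 else θ / p i with hsf
  have step1 : ∑ i, p i * (1 / (n:ℝ) * (κ i ^ 2
        * (gam * sf i - (sf i) ^ 2 * (v i + lam * n * gam) / (2 * lam * n))))
      ≤ ∑ i, p i * (D (Function.update α i (α i + Δ i)) - D α) :=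
    Finset.sum_le_sum fun i _ => mul_le_mul_of_nonneg_left (haux6 i (sf i)) (hp0 i)
  have hs1 : ∑ i, p i * (1 / (n:ℝ) * (κ i ^ 2
        * (gam * sf i - (sf i) ^ 2 * (v i + lam * n * gam) / (2 * lam * n))))
      = ∑ i ∈ I, p i * (1 / (n:ℝ) * (κ i ^ 2
        * (gam * sf i - (sf i) ^ 2 * (v i + lam * n * gam) / (2 * lam * n)))) := by
    refine (Finset.sum_subset (Finset.filter_subset _ _) ?_).symm
    intro i _ hi
    have hκ0 : κ i = 0 := by
      by_contra hne
      exact hi (Finset.mem_filter.mpr ⟨Finset.mem_univ i, hne⟩)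
    simp [hκ0]
  have hs2 : ∑ i ∈ I, p i * (1 / (n:ℝ) * (κ i ^ 2
        * (gam * sf i - (sf i) ^ 2 * (v i + lam * n * gam) / (2 * lam * n))))
      = ∑ i ∈ I, (-(θ / (2 * lam * (n:ℝ) ^ 2))
          * ((θ * (v i + n * lam * gam) / p i - n * lam * gam) * κ i ^ 2)
        + θ * (gam / (2 * n) * κ i ^ 2)) := by
    refine Finset.sum_congr rfl fun i hi => ?_
    have hκne : κ i ≠ 0 := (Finset.mem_filter.mp hi).2
    have hpi : 0 < p i := hcoh i hκne
    have hsfi : sf i = θ / p i := by simp only [hsf, if_neg hκne]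
    rw [hsfi]
    field_simp
    ring
  have hgapsum : θ * (P w - D α) = ∑ i ∈ I, θ * (gam / (2 * n) * κ i ^ 2) := by
    rw [hgap]
    have h1 : θ * (gam / (2 * (n:ℝ)) * ∑ i, κ i ^ 2) = ∑ i, θ * (gam / (2 * n) * κ i ^ 2) := by
      rw [Finset.mul_sum, Finset.mul_sum]
    rw [h1]
    refine (Finset.sum_subset (Finset.filter_subset _ _) ?_).symm
    intro i _ hi
    have hκ0 : κ i = 0 := by
      by_contra hne
      exact hi (Finset.mem_filter.mpr ⟨Finset.mem_univ i, hne⟩)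
    simp [hκ0]
  have hRHS : -(θ / (2 * lam * (n : ℝ) ^ 2)) *
        ∑ i ∈ I, (θ * (v i + n * lam * gam) / p i - n * lam * gam) * κ i ^ 2
      = ∑ i ∈ I, -(θ / (2 * lam * (n:ℝ) ^ 2))
          * ((θ * (v i + n * lam * gam) / p i - n * lam * gam) * κ i ^ 2) :=
    Finset.mul_sum _ _ _
  have hsplit2 : ∑ i ∈ I, (-(θ / (2 * lam * (n:ℝ) ^ 2))
          * ((θ * (v i + n * lam * gam) / p i - n * lam * gam) * κ i ^ 2)
        + θ * (gam / (2 * n) * κ i ^ 2))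
      = (∑ i ∈ I, -(θ / (2 * lam * (n:ℝ) ^ 2))
          * ((θ * (v i + n * lam * gam) / p i - n * lam * gam) * κ i ^ 2))
        + ∑ i ∈ I, θ * (gam / (2 * n) * κ i ^ 2) := Finset.sum_add_distrib
  rw [ge_iff_le, hRHS, hgapsum]
  rw [hs1, hs2, hsplit2] at step1
  linarith
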